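/- For a cubic f = x_0 g_0 + x_1 g_1 + x_2 g_2 + h with g_i ∈ K[x_{N−1}, x_N] quadratics and h ∈ K[x_3,...,x_N] a cubic (the minimal family normal form), the Hessian matrix evaluated at any point of the 2-plane V(x_3,...,x_N) has rank at most 2. -/

import Mathlib

open MvPolynomial

lemma aux_eval_eq_zero_of_homog {σ K : Type*} [CommSemiring K] {q : MvPolynomial σ K}
    {S : Set σ} {d : ℕ} (hq : q.IsHomogeneous d) (hd : d ≠ 0) (hs : ↑q.vars ⊆ S)
    {p : σ → K} (hp : ∀ j ∈ S, p j = 0) : eval p q = 0 := by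
  classical
  rw [eval_eq]
  refine Finset.sum_eq_zero fun m hm => ?_
  have hdeg : m.degree = d := by
    by_contra hne
    exact (mem_support_iff.mp hm) (hq.coeff_eq_zero hne)
  have hm0 : m ≠ 0 := by
    rintro rfl
    simp [map_zero] at hdeg
    omega
  obtain ⟨i, hi⟩ := Finsupp.support_nonempty_iff.mpr hm0
  rw [Finset.prod_eq_zero hi, mul_zero]
  rw [hp i (hs ((mem_vars i).mpr ⟨m, hm, hi⟩)),
    zero_pow (Finsupp.mem_support_iff.mp hi)]

lemma aux_vars_pderiv {σ K : Type*} [CommRing K] [DecidableEq σ] (i : σ)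
    (q : MvPolynomial σ K) : (pderiv i q).vars ⊆ q.vars := by
  conv_lhs => rw [q.as_sum, map_sum]
  refine (vars_sum_subset _ _).trans ?_
  intro j hj
  simp only [Finset.mem_biUnion] at hj
  obtain ⟨m, hm, hjm⟩ := hj
  rw [pderiv_monomial] at hjm
  by_cases hc : coeff m q * m i = 0
  · rw [hc] at hjm; simp at hjm
  · rw [vars_monomial hc] at hjm
    exact (mem_vars j).mpr ⟨m, hm, Finsupp.support_tsub hjm⟩

lemma aux_isHomog_pderiv {σ K : Type*} [CommRing K] [DecidableEq σ]
    {q : MvPolynomial σ K} {d : ℕ} (hq : q.IsHomogeneous d) (i : σ) :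
    (pderiv i q).IsHomogeneous (d - 1) := by
  conv_lhs => rw [q.as_sum, map_sum]
  refine IsHomogeneous.sum _ _ _ fun m hm => ?_
  rw [pderiv_monomial]
  rcases eq_or_ne (m i) 0 with h0 | h0
  · simp only [h0, Nat.cast_zero, mul_zero, map_zero]
    exact isHomogeneous_zero _ _ _
  · apply isHomogeneous_monomial
    have hdeg : m.degree = d := by
      by_contra hne
      exact (mem_support_iff.mp hm) (hq.coeff_eq_zero hne)
    have hle : Finsupp.single i 1 ≤ m :=
      Finsupp.single_le_iff.mpr (Nat.one_le_iff_ne_zero.mpr h0)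
    have hadd : (m - Finsupp.single i 1) + Finsupp.single i 1 = m :=
      tsub_add_cancel_of_le hle
    have h1 : Finsupp.degree (Finsupp.single i (1 : ℕ)) = 1 := by
      exact Finsupp.degree_single i 1
    have hw : ∀ x : σ →₀ ℕ, Finsupp.degree x = Finsupp.weight 1 x := by
      intro x; rw [Finsupp.degree_eq_weight_one]; rfl
    have hsum : Finsupp.degree (m - Finsupp.single i 1) +
        Finsupp.degree (Finsupp.single i (1 : ℕ)) = Finsupp.degree m := by
      rw [hw, hw, hw, ← map_add, hadd]
    rw [h1, hdeg] at hsum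
    omega

/-- For a minimal-family cubic `f = x₀g₀ + x₁g₁ + x₂g₂ + h`, with `g₀,g₁,g₂` quadratic
forms in the two variables `x_{N-1}, x_N` and `h` a cubic form in `x₃,…,x_N`, the
Hessian matrix of `f` evaluated at any point of the 2-plane `V(x₃,…,x_N)` has rank at
most `2`. -/
theorem minimal_family_hessian_rank_le_two
    {K : Type*} [Field K] [CharZero K] {N : ℕ} (hN : 4 ≤ N)
    (g : Fin 3 → MvPolynomial (Fin (N + 1)) K)
    (hg2 : ∀ i, (g i).IsHomogeneous 2)
    (hgsupp : ∀ i, g i ∈ MvPolynomial.supported K {j : Fin (N + 1) | N - 1 ≤ (j : ℕ)})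
    (h : MvPolynomial (Fin (N + 1)) K) (hh3 : h.IsHomogeneous 3)
    (hhsupp : h ∈ MvPolynomial.supported K {j : Fin (N + 1) | 3 ≤ (j : ℕ)})
    (f : MvPolynomial (Fin (N + 1)) K)
    (hf : f = X 0 * g 0 + X 1 * g 1 + X 2 * g 2 + h)
    (p : Fin (N + 1) → K) (hp : ∀ j : Fin (N + 1), 3 ≤ (j : ℕ) → p j = 0) :
    Matrix.rank (Matrix.of fun i j : Fin (N + 1) =>
      MvPolynomial.eval p (pderiv i (pderiv j f))) ≤ 2 := by
  classical
  set S1 : Set (Fin (N + 1)) := {j : Fin (N + 1) | N - 1 ≤ (j : ℕ)} with hS1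
  set S2 : Set (Fin (N + 1)) := {j : Fin (N + 1) | 3 ≤ (j : ℕ)} with hS2
  have hp1 : ∀ j ∈ S1, p j = 0 := fun j hj => hp j (by simp only [hS1, Set.mem_setOf_eq] at hj; omega)
  have hp2 : ∀ j ∈ S2, p j = 0 := fun j hj => hp j hj
  -- each `X k * g l` term has vanishing second derivatives at `p` for `j` small
  have hterm : ∀ (l : Fin 3) (k i j : Fin (N + 1)), (j : ℕ) < N - 1 →
      eval p (pderiv i (pderiv j (X k * g l))) = 0 := by
    intro l k i j hj
    have hvars : ↑(g l).vars ⊆ S1 := mem_supported.mp (hgsupp l)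
    have hjq : pderiv j (g l) = 0 := by
      apply pderiv_eq_zero_of_notMem_vars
      intro hmem
      have := hvars hmem
      simp only [hS1, Set.mem_setOf_eq] at this
      omega
    rw [pderiv_mul, hjq, mul_zero, add_zero]
    rcases eq_or_ne k j with rfl | hkj
    · rw [pderiv_X_self, one_mul]
      refine aux_eval_eq_zero_of_homog (aux_isHomog_pderiv (hg2 l) i) one_ne_zero ?_ hp1
      intro x hx
      exact hvars (Finset.mem_coe.mpr (aux_vars_pderiv i (g l) (Finset.mem_coe.mp hx)))
    · rw [pderiv_X_of_ne hkj, zero_mul, map_zero, map_zero]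
  -- the `h` term always has vanishing second derivatives at `p`
  have hhterm : ∀ i j : Fin (N + 1), eval p (pderiv i (pderiv j h)) = 0 := by
    intro i j
    have hvars : ↑h.vars ⊆ S2 := mem_supported.mp hhsupp
    refine aux_eval_eq_zero_of_homog
      (aux_isHomog_pderiv (aux_isHomog_pderiv hh3 j) i) one_ne_zero ?_ hp2
    intro x hx
    exact hvars (Finset.mem_coe.mpr (aux_vars_pderiv j h
      (aux_vars_pderiv i _ (Finset.mem_coe.mp hx))))
  -- columns with index `< N - 1` vanish
  have hcol : ∀ i j : Fin (N + 1), (j : ℕ) < N - 1 →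
      eval p (pderiv i (pderiv j f)) = 0 := by
    intro i j hj
    rw [hf]
    simp only [map_add]
    rw [hterm 0 0 i j hj, hterm 1 1 i j hj, hterm 2 2 i j hj, hhterm i j]
    simp
  -- now factor the Hessian matrix through a rank-≤-2 product
  set M : Matrix (Fin (N + 1)) (Fin (N + 1)) K := Matrix.of fun i j : Fin (N + 1) =>
    MvPolynomial.eval p (pderiv i (pderiv j f)) with hM
  have hab : (⟨N - 1, by omega⟩ : Fin (N + 1)) ≠ ⟨N, by omega⟩ := by
    intro hc
    have := congrArg Fin.val hc
    simp at this
    omega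
  set e : Fin 2 → Fin (N + 1) := ![⟨N - 1, by omega⟩, ⟨N, by omega⟩] with he
  set A : Matrix (Fin (N + 1)) (Fin 2) K := Matrix.of fun i k => M i (e k) with hA
  set B : Matrix (Fin 2) (Fin (N + 1)) K :=
    Matrix.of fun k j => if j = e k then 1 else 0 with hB
  have hMAB : M = A * B := by
    ext i j
    rw [Matrix.mul_apply, Fin.sum_univ_two]
    simp only [hA, hB, Matrix.of_apply]
    by_cases hja : j = e 0
    · have hne : j ≠ e 1 := by
        rw [hja, he]; simpa using hab
      rw [if_pos hja, if_neg hne, mul_one, mul_zero, add_zero, hja]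
    · by_cases hjb : j = e 1
      · rw [if_pos hjb, if_neg hja, mul_one, mul_zero, zero_add, hjb]
      · rw [if_neg hja, if_neg hjb, mul_zero, mul_zero, add_zero]
        have hjv : (j : ℕ) < N - 1 := by
          have h1 : (j : ℕ) ≠ N - 1 := fun hc => hja (by
            rw [he]; exact Fin.ext (by simpa using hc))
          have h2 : (j : ℕ) ≠ N := fun hc => hjb (by
            rw [he]; exact Fin.ext (by simpa using hc))
          have := j.isLt
          omega
        exact hcol i j hjv
  rw [hMAB]
  exact (Matrix.rank_mul_le_right A B).trans
    ((Matrix.rank_le_card_height B).trans (by simp))
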